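/- For all integers λ ≥ 0 and s with 0 ≤ s ≤ λ, the identity u^{s(s−λ)}·[λ; s] = Σ_{k=0}^{⌊λ/2⌋} b_λ(k)·[λ−2k; s−k] holds in the field of rational functions ℚ(u). -/

import Mathlib

open Polynomial Finset

/-- The Gaussian binomial coefficient `[n; k] ∈ ℤ[u]`, defined as
`∏_{i=1}^{k} (1 − u^{n−i+1})/(1 − u^i)` for `0 ≤ k ≤ n`, and `0` otherwise. -/
noncomputable def gb (n : ℕ) (k : ℤ) : Polynomial ℤ :=
  if 0 ≤ k ∧ k ≤ (n : ℤ) then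
    (∏ i ∈ Finset.Icc 1 k.toNat, ((X : Polynomial ℤ) ^ (n - i + 1) - 1)) /ₘ
      (∏ i ∈ Finset.Icc 1 k.toNat, ((X : Polynomial ℤ) ^ i - 1))
  else 0

/-- The canonical embedding `ℤ[u] → ℚ(u)`. -/
noncomputable def iQ : Polynomial ℤ →+* RatFunc ℚ :=
  (algebraMap (Polynomial ℚ) (RatFunc ℚ)).comp (Polynomial.mapRingHom (Int.castRingHom ℚ))

/-- `(1:u)_n := ∏_{i=1}^{n} (1 − u^i)⁻¹` in `ℚ(u)`. -/
noncomputable def poch (n : ℕ) : RatFunc ℚ :=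
  ∏ i ∈ Finset.Icc 1 n, (1 - RatFunc.X ^ i)⁻¹

/-- `b_λ(s) := u^{s(s−λ)}·(1:u)_s·(1:u)_{λ−2s}·(1:u)_λ⁻¹ ∈ ℚ(u)` if `2s ≤ λ`,
and `b_λ(s) := 0` if `2s > λ`. -/
noncomputable def bcoef (l s : ℕ) : RatFunc ℚ :=
  if 2 * s ≤ l then
    RatFunc.X ^ ((s : ℤ) * ((s : ℤ) - l)) * poch s * poch (l - 2 * s) * (poch l)⁻¹
  else 0


noncomputable def E (k : ℕ) : RatFunc ℚ := ∏ i ∈ Finset.Icc 1 k, (1 - RatFunc.X ^ i)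

lemma one_sub_X_pow_ne_zero {i : ℕ} (hi : 1 ≤ i) : (1 - RatFunc.X ^ i : RatFunc ℚ) ≠ 0 := by
  have h1 : ((X : ℚ[X]) ^ i - 1) ≠ 0 := by
    intro h
    have := congrArg Polynomial.natDegree h
    have h3 : ((X : ℚ[X]) ^ i - 1) = X ^ i - C 1 := by simp
    rw [h3, Polynomial.natDegree_X_pow_sub_C] at this
    simp at this; omega
  have h2 : (RatFunc.X ^ i - 1 : RatFunc ℚ) ≠ 0 := by
    have : (RatFunc.X ^ i - 1 : RatFunc ℚ) = algebraMap ℚ[X] (RatFunc ℚ) ((X:ℚ[X])^i - 1) := by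
      simp [← RatFunc.algebraMap_X]
    rw [this]
    exact fun h => h1 (RatFunc.algebraMap_injective ℚ (by simpa using h))
  intro h
  apply h2
  rw [← neg_eq_zero]; simpa [neg_sub] using h

lemma E_ne_zero (k : ℕ) : E k ≠ 0 := by
  refine Finset.prod_ne_zero_iff.mpr fun i hi => one_sub_X_pow_ne_zero ?_
  exact (Finset.mem_Icc.mp hi).1

lemma poch_eq_inv_E (k : ℕ) : (∏ i ∈ Finset.Icc 1 k, (1 - RatFunc.X ^ i)⁻¹) = (E k)⁻¹ := by
  rw [E, ← Finset.prod_inv_distrib]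

lemma E_succ (k : ℕ) : E (k+1) = E k * (1 - RatFunc.X ^ (k+1)) := by
  rw [E, E, Finset.prod_Icc_succ_top (by omega)]

noncomputable def G (n k : ℕ) : RatFunc ℚ :=
  if k ≤ n then E n * (E k)⁻¹ * (E (n - k))⁻¹ else 0

lemma E_zero : E 0 = 1 := by
  rw [E, show Finset.Icc 1 0 = (∅ : Finset ℕ) by simp, Finset.prod_empty]

lemma G_zero (n : ℕ) : G n 0 = 1 := by
  rw [G, if_pos (Nat.zero_le n), E_zero, Nat.sub_zero, inv_one, mul_one,
    mul_inv_cancel₀ (E_ne_zero n)]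

lemma G_of_lt {n k : ℕ} (h : n < k) : G n k = 0 := by simp [G, Nat.not_le.mpr h]

lemma G_self (n : ℕ) : G n n = 1 := by
  rw [G, if_pos le_rfl, Nat.sub_self, E_zero, inv_one, mul_one, mul_inv_cancel₀ (E_ne_zero n)]

lemma pascal (n k : ℕ) :
    G (n+1) (k+1) = G n (k+1) + RatFunc.X ^ (n - k) * G n k := by
  rcases lt_or_ge n k with h | hkn
  · rw [G_of_lt (by omega), G_of_lt (by omega), G_of_lt h]; ring
  rcases eq_or_lt_of_le hkn with rfl | hlt
  · rw [G_self, G_of_lt (by omega), G_self]; simp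
  obtain ⟨a, rfl⟩ : ∃ a, n = k + 1 + a := ⟨n - k - 1, by omega⟩
  rw [G, if_pos (by omega), G, if_pos (by omega), G, if_pos (by omega)]
  rw [show k + 1 + a + 1 - (k+1) = a + 1 from by omega,
      show k + 1 + a - (k+1) = a from by omega,
      show k + 1 + a - k = a + 1 from by omega]
  rw [show k + 1 + a + 1 = (k + 1 + a) + 1 from rfl, E_succ (k+1+a), E_succ a, E_succ k]
  have h1 := E_ne_zero (k + 1 + a)
  have h2 := E_ne_zero k
  have h3 := E_ne_zero a
  have h4 := one_sub_X_pow_ne_zero (i := a + 1) (by omega)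
  have h5 := one_sub_X_pow_ne_zero (i := k + 1) (by omega)
  field_simp
  ring

lemma GE_succ (m k : ℕ) :
    G m (k+1) * E (k+1) = G m k * E k * (1 - RatFunc.X ^ ((m:ℤ) - (k:ℤ))) := by
  rcases lt_or_ge m k with h | hkm
  · rw [G_of_lt h, G_of_lt (by omega)]; ring
  rcases eq_or_lt_of_le hkm with rfl | hlt
  · rw [G_of_lt (by omega), G_self]; simp
  obtain ⟨a, rfl⟩ : ∃ a, m = k + 1 + a := ⟨m - k - 1, by omega⟩
  rw [G, if_pos (by omega), G, if_pos (by omega)]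
  rw [show k + 1 + a - (k+1) = a from by omega,
      show k + 1 + a - k = a + 1 from by omega]
  rw [show ((k + 1 + a : ℕ) : ℤ) - (k : ℤ) = ((a + 1 : ℕ) : ℤ) from by push_cast; ring,
      zpow_natCast]
  rw [E_succ a, E_succ k]
  have h1 := E_ne_zero (k + 1 + a)
  have h2 := E_ne_zero k
  have h3 := E_ne_zero a
  have h4 := one_sub_X_pow_ne_zero (i := a + 1) (by omega)
  have h5 := one_sub_X_pow_ne_zero (i := k + 1) (by omega)
  field_simp

noncomputable def S (s m k : ℕ) : RatFunc ℚ :=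
  RatFunc.X ^ (((s:ℤ) - (k:ℤ)) * ((m:ℤ) - (k:ℤ))) * (G s k * G m k * E k)

lemma S_of_lt {s m k : ℕ} (h : m < k) : S s m k = 0 := by
  rw [S, G_of_lt h]; ring

lemma S_of_lt' {s m k : ℕ} (h : s < k) : S s m k = 0 := by
  rw [S, G_of_lt h]; ring

lemma zp_nat' (a : ℤ) (b : ℕ) (h : a = (b:ℤ)) :
    (RatFunc.X : RatFunc ℚ) ^ a = RatFunc.X ^ b := by
  rw [h, zpow_natCast]

lemma zp_nat (a a' : ℤ) (b : ℕ) (h : a * a' = (b:ℤ)) :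
    (RatFunc.X : RatFunc ℚ) ^ (a * a') = RatFunc.X ^ b := by
  rw [h, zpow_natCast]

lemma step (s m k : ℕ) (hk : k ≤ s) :
    S (s+1) m (k+1) = RatFunc.X ^ ((m:ℤ) - (k:ℤ) - 1) * S s m (k+1)
      + (1 - RatFunc.X ^ ((m:ℤ) - (k:ℤ))) * S s m k := by
  rcases lt_or_ge m k with hmk | hkm
  · rw [S_of_lt (by omega : m < k + 1), S_of_lt (by omega : m < k + 1), S_of_lt hmk]; ring
  rcases eq_or_lt_of_le hkm with rfl | hlt
  · -- m = k
    rw [S_of_lt (by omega : k < k + 1), S_of_lt (by omega : k < k + 1),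
      sub_self, zpow_zero, sub_self]
    ring
  -- k < m
  obtain ⟨c, rfl⟩ : ∃ c, m = k + 1 + c := ⟨m - k - 1, by omega⟩
  have hGE := GE_succ (k+1+c) k
  rw [zp_nat' (((k+1+c:ℕ):ℤ) - ((k:ℕ):ℤ)) (c+1) (by push_cast; ring)] at hGE
  rcases eq_or_lt_of_le hk with rfl | hks
  · -- s = k
    rw [S_of_lt' (by omega : k < k + 1), mul_zero, zero_add, S, S, G_self, G_self]
    rw [zp_nat ((((k+1:ℕ)):ℤ) - (((k+1:ℕ)):ℤ)) ((((k+1+c:ℕ)):ℤ) - (((k+1:ℕ)):ℤ)) 0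
        (by push_cast; ring),
      zp_nat (((k:ℕ):ℤ) - ((k:ℕ):ℤ)) ((((k+1+c:ℕ)):ℤ) - ((k:ℕ):ℤ)) 0 (by push_cast; ring),
      zp_nat' (((k+1+c:ℕ):ℤ) - ((k:ℕ):ℤ)) (c+1) (by push_cast; ring)]
    simp only [pow_zero, one_mul, mul_one]
    linear_combination hGE
  -- k < s
  obtain ⟨d, rfl⟩ : ∃ d, s = k + 1 + d := ⟨s - k - 1, by omega⟩
  simp only [S]
  have hP := pascal (k+1+d) k
  rw [show k+1+d-k = d+1 from by omega] at hP
  rw [zp_nat (((k+1+d+1:ℕ):ℤ) - ((k+1:ℕ):ℤ)) (((k+1+c:ℕ):ℤ) - ((k+1:ℕ):ℤ)) ((d+1)*c)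
        (by push_cast; ring),
      zp_nat (((k+1+d:ℕ):ℤ) - ((k+1:ℕ):ℤ)) (((k+1+c:ℕ):ℤ) - ((k+1:ℕ):ℤ)) (d*c)
        (by push_cast; ring),
      zp_nat (((k+1+d:ℕ):ℤ) - ((k:ℕ):ℤ)) (((k+1+c:ℕ):ℤ) - ((k:ℕ):ℤ)) ((d+1)*(c+1))
        (by push_cast; ring),
      zp_nat' (((k+1+c:ℕ):ℤ) - ((k:ℕ):ℤ) - 1) c (by push_cast; ring),
      zp_nat' (((k+1+c:ℕ):ℤ) - ((k:ℕ):ℤ)) (c+1) (by push_cast; ring),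
      hP]
  linear_combination (RatFunc.X^((d+1)*c) * (G (k+1+d) (k+1) + RatFunc.X^(d+1) * G (k+1+d) k) - RatFunc.X^(d*c) * RatFunc.X^c * G (k+1+d) (k+1)) * hGE

lemma S_zero (n m : ℕ) : S n m 0 = RatFunc.X ^ ((n:ℤ) * (m:ℤ)) := by
  rw [S, G_zero, G_zero, E_zero,
    show ((n:ℤ) - ((0:ℕ):ℤ)) * ((m:ℤ) - ((0:ℕ):ℤ)) = (n:ℤ) * (m:ℤ) from by push_cast; ring]
  ring

lemma Fid (s m : ℕ) : ∑ k ∈ Finset.range (s+1), S s m k = 1 := by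
  induction s with
  | zero =>
    rw [Finset.sum_range_one, S_zero, show ((0:ℕ):ℤ) * (m:ℤ) = 0 from by push_cast; ring,
      zpow_zero]
  | succ s ih =>
    have hx : (RatFunc.X : RatFunc ℚ) ≠ 0 := RatFunc.X_ne_zero
    rw [Finset.sum_range_succ']
    have h1 : ∀ k ∈ Finset.range (s+1), S (s+1) m (k+1)
        = (RatFunc.X ^ ((m:ℤ) - (k:ℤ) - 1) * S s m (k+1))
          + (1 - RatFunc.X ^ ((m:ℤ) - (k:ℤ))) * S s m k := fun k hk =>
      step s m k (Nat.lt_succ_iff.mp (Finset.mem_range.mp hk))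
    rw [Finset.sum_congr rfl h1, Finset.sum_add_distrib]
    have key : (∑ k ∈ Finset.range (s+1), RatFunc.X ^ ((m:ℤ) - (k:ℤ)) * S s m k)
        + (∑ k ∈ Finset.range (s+1), (1 - RatFunc.X ^ ((m:ℤ) - (k:ℤ))) * S s m k) = 1 := by
      rw [← Finset.sum_add_distrib]
      have hpt : ∀ k ∈ Finset.range (s+1),
          RatFunc.X ^ ((m:ℤ) - (k:ℤ)) * S s m k
            + (1 - RatFunc.X ^ ((m:ℤ) - (k:ℤ))) * S s m k = S s m k := fun k _ => by ring
      rw [Finset.sum_congr rfl hpt, ih]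
    have hshift : (∑ k ∈ Finset.range (s+1), RatFunc.X ^ ((m:ℤ) - (k:ℤ) - 1) * S s m (k+1))
        = (∑ k ∈ Finset.range (s+1), RatFunc.X ^ ((m:ℤ) - (k:ℤ)) * S s m k)
          - RatFunc.X ^ ((m:ℤ) - ((0:ℕ):ℤ)) * S s m 0 := by
      have h2 := Finset.sum_range_succ' (fun (k:ℕ) => RatFunc.X ^ ((m:ℤ) - (k:ℤ)) * S s m k) (s+1)
      rw [Finset.sum_range_succ (fun (k:ℕ) => RatFunc.X ^ ((m:ℤ) - (k:ℤ)) * S s m k) (s+1),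
          S_of_lt' (Nat.lt_succ_self s), mul_zero, add_zero] at h2
      have h3 : ∀ i ∈ Finset.range (s+1),
          (fun (k:ℕ) => RatFunc.X ^ ((m:ℤ) - (k:ℤ)) * S s m k) (i+1)
            = RatFunc.X ^ ((m:ℤ) - (i:ℤ) - 1) * S s m (i+1) := by
        intro i _
        simp only
        congr 1
        push_cast
        ring
      rw [Finset.sum_congr rfl h3] at h2
      linear_combination -h2
    rw [hshift, S_zero, S_zero]
    have hz : (RatFunc.X : RatFunc ℚ) ^ ((m:ℤ) - ((0:ℕ):ℤ)) * RatFunc.X ^ ((s:ℤ) * (m:ℤ))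
        = RatFunc.X ^ (((s+1:ℕ):ℤ) * (m:ℤ)) := by
      rw [← zpow_add₀ hx]
      congr 1
      push_cast; ring
    linear_combination key - hz

noncomputable def Dp (k : ℕ) : Polynomial ℤ := ∏ i ∈ Finset.Icc 1 k, ((X:Polynomial ℤ)^i - 1)
noncomputable def Mp (n k : ℕ) : Polynomial ℤ :=
  ∏ j ∈ Finset.Icc (n-k+1) n, ((X:Polynomial ℤ)^j - 1)

noncomputable def P : ℕ → ℕ → Polynomial ℤ
  | _, 0 => 1
  | 0, _+1 => 0
  | n+1, k+1 => P n k + X^(k+1) * P n (k+1)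

lemma P_of_lt : ∀ {n k : ℕ}, n < k → P n k = 0 := by
  intro n
  induction n with
  | zero => intro k hk; match k, hk with | k+1, _ => rfl
  | succ n ih =>
    intro k hk
    match k, hk with
    | k+1, hk =>
      show P n k + X^(k+1) * P n (k+1) = 0
      rw [ih (by omega), ih (by omega), mul_zero, add_zero]

lemma Dp_monic (k : ℕ) : (Dp k).Monic := by
  apply Polynomial.monic_prod_of_monic
  intro i hi
  have : ((X:Polynomial ℤ)^i - 1) = X^i - C 1 := by simp
  rw [this]
  exact monic_X_pow_sub_C 1 (by have := (Finset.mem_Icc.mp hi).1; omega)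

lemma Mp_succ_succ (n k : ℕ) (hk : k ≤ n) :
    Mp (n+1) (k+1) = Mp n k * ((X:Polynomial ℤ)^(n+1) - 1) := by
  rw [Mp, Mp, show n+1-(k+1) = n-k from by omega,
    Finset.prod_Icc_succ_top (by omega)]

lemma Mp_peel (n k : ℕ) (hk : k < n) :
    Mp n (k+1) = ((X:Polynomial ℤ)^(n-k) - 1) * Mp n k := by
  obtain ⟨a, rfl⟩ : ∃ a, n = k + 1 + a := ⟨n - k - 1, by omega⟩
  rw [Mp, Mp, show k+1+a-(k+1)+1 = a+1 from by omega, show k+1+a-k = a+1 from by omega,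
    Finset.Icc_add_one_left_eq_Ioc, Finset.Icc_add_one_left_eq_Ioc,
    ← Finset.prod_Ioc_consecutive _ (show a ≤ a+1 from by omega) (show a+1 ≤ k+1+a from by omega),
    Nat.Ioc_succ_singleton, Finset.prod_singleton]

lemma key : ∀ n k : ℕ, k ≤ n → Dp k * P n k = Mp n k := by
  intro n
  induction n with
  | zero =>
    intro k hk
    interval_cases k
    simp [Dp, Mp, P, show Finset.Icc 1 0 = (∅: Finset ℕ) from by simp]
  | succ n ih =>
    intro k hk
    match k with
    | 0 => simp [Dp, Mp, P, show Finset.Icc (n+1+1) (n+1) = (∅: Finset ℕ) from by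
        rw [Finset.Icc_eq_empty_iff]; omega, show Finset.Icc 1 0 = (∅: Finset ℕ) from by simp]
    | k+1 =>
      show Dp (k+1) * (P n k + X^(k+1) * P n (k+1)) = Mp (n+1) (k+1)
      have hDp : Dp (k+1) = Dp k * ((X:Polynomial ℤ)^(k+1) - 1) :=
        Finset.prod_Icc_succ_top (by omega) _
      rcases eq_or_lt_of_le (show k ≤ n from by omega) with rfl | hkn
      · rw [P_of_lt (Nat.lt_succ_self k), mul_zero, add_zero, hDp,
          Mp_succ_succ _ _ le_rfl]
        have := ih k le_rfl
        linear_combination ((X:Polynomial ℤ)^(k+1) - 1) * this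
      · have ih1 := ih k (by omega)
        have ih2 := ih (k+1) (by omega)
        rw [Mp_succ_succ _ _ (by omega), mul_add, hDp, Mp_peel n k hkn] at *
        have hxp : (X:Polynomial ℤ)^(k+1) * X^(n-k) = X^(n+1) := by
          rw [← pow_add, show k+1+(n-k) = n+1 from by omega]
        linear_combination ((X:Polynomial ℤ)^(k+1) - 1) * ih1
          + (X:Polynomial ℤ)^(k+1) * ih2 + Mp n k * hxp

lemma iQ_pow_sub_one (i : ℕ) : iQ ((X:Polynomial ℤ)^i - 1) = RatFunc.X^i - 1 := by
  simp [iQ, Polynomial.map_pow, RatFunc.algebraMap_X]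

lemma iQ_Dp (k : ℕ) : iQ (Dp k) = (-1)^k * E k := by
  rw [Dp, map_prod]
  have h1 : ∀ i ∈ Finset.Icc 1 k, iQ ((X:Polynomial ℤ)^i - 1) = (-1) * (1 - RatFunc.X^i) := by
    intro i _
    rw [iQ_pow_sub_one]; ring
  rw [Finset.prod_congr rfl h1, Finset.prod_mul_distrib, Finset.prod_const, Nat.card_Icc, E]
  norm_num

lemma E_split (n k : ℕ) (hk : k ≤ n) :
    E (n-k) * ∏ j ∈ Finset.Icc (n-k+1) n, (1 - RatFunc.X^j) = E n := by
  rw [E, E, show (1:ℕ) = 0+1 from rfl, Finset.Icc_add_one_left_eq_Ioc, Finset.Icc_add_one_left_eq_Ioc, zero_add, Finset.Icc_add_one_left_eq_Ioc]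
  exact Finset.prod_Ioc_consecutive _ (by omega) (by omega)

lemma iQ_Mp (n k : ℕ) (hk : k ≤ n) : iQ (Mp n k) = (-1)^k * (E n * (E (n-k))⁻¹) := by
  rw [Mp, map_prod]
  have h1 : ∀ i ∈ Finset.Icc (n-k+1) n, iQ ((X:Polynomial ℤ)^i - 1)
      = (-1) * (1 - RatFunc.X^i) := by
    intro i _
    rw [iQ_pow_sub_one]; ring
  rw [Finset.prod_congr rfl h1, Finset.prod_mul_distrib, Finset.prod_const, Nat.card_Icc]
  have h2 := E_split n k hk
  have h3 := E_ne_zero (n-k)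
  rw [show n + 1 - (n-k+1) = k from by omega]
  rw [show (∏ j ∈ Finset.Icc (n-k+1) n, (1 - RatFunc.X^j)) = E n * (E (n-k))⁻¹ from by
    field_simp; linear_combination h2]

lemma iQ_P (n k : ℕ) (hk : k ≤ n) : iQ (P n k) = G n k := by
  have h := congrArg iQ (key n k hk)
  rw [map_mul, iQ_Dp, iQ_Mp n k hk] at h
  rw [G, if_pos hk]
  have h1 := E_ne_zero k
  have h2 := E_ne_zero (n-k)
  have h3 : ((-1:RatFunc ℚ))^k ≠ 0 := by
    apply pow_ne_zero; norm_num
  have h4 : ((-1:RatFunc ℚ))^k * (E k * iQ (P n k)) = (-1)^k * (E n * (E (n-k))⁻¹) := by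
    linear_combination h
  have h5 := mul_left_cancel₀ h3 h4
  field_simp at h5
  field_simp
  linear_combination h5

lemma prod_flip (n k : ℕ) (hk : k ≤ n) :
    (∏ i ∈ Finset.Icc 1 k, ((X : Polynomial ℤ) ^ (n - i + 1) - 1)) = Mp n k := by
  rw [Mp]
  refine Finset.prod_nbij' (fun i => n - i + 1) (fun j => n - j + 1) ?_ ?_ ?_ ?_ ?_
  · intro a ha
    rw [Finset.mem_Icc] at ha
    show n - a + 1 ∈ Finset.Icc (n-k+1) n
    rw [Finset.mem_Icc]
    omega
  · intro a ha
    rw [Finset.mem_Icc] at ha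
    show n - a + 1 ∈ Finset.Icc 1 k
    rw [Finset.mem_Icc]
    omega
  · intro a ha
    rw [Finset.mem_Icc] at ha
    show n - (n - a + 1) + 1 = a
    omega
  · intro a ha
    rw [Finset.mem_Icc] at ha
    show n - (n - a + 1) + 1 = a
    omega
  · intro a _
    rfl

lemma gb_eq (n k : ℕ) (hk : k ≤ n) : gb n (k:ℤ) = P n k := by
  rw [gb, if_pos ⟨Int.natCast_nonneg k, by exact_mod_cast hk⟩, Int.toNat_natCast,
    prod_flip n k hk, ← Dp, ← key n k hk, mul_divByMonic_cancel_left _ (Dp_monic k)]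

lemma iQ_gb (n k : ℕ) (hk : k ≤ n) : iQ (gb n (k:ℤ)) = G n k := by
  rw [gb_eq n k hk, iQ_P n k hk]

lemma poch_eq (n : ℕ) : poch n = (E n)⁻¹ := by
  rw [poch, poch_eq_inv_E]

/-- For all integers `λ ≥ 0` and `0 ≤ s ≤ λ`, the identity
`u^{s(s−λ)}·[λ; s] = Σ_{k=0}^{⌊λ/2⌋} b_λ(k)·[λ−2k; s−k]` holds in `ℚ(u)`. -/
theorem stmt_6 (lam s : ℕ) (h : s ≤ lam) :
    RatFunc.X ^ ((s : ℤ) * ((s : ℤ) - lam)) * iQ (gb lam s) =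
      ∑ k ∈ Finset.range (lam / 2 + 1),
        bcoef lam k * iQ (gb (lam - 2 * k) ((s : ℤ) - k)) := by
  have hx : (RatFunc.X : RatFunc ℚ) ≠ 0 := RatFunc.X_ne_zero
  set m := lam - s with hmdef
  have hsum : ∑ k ∈ Finset.range (lam/2 + 1), S s m k = 1 := by
    have h1 : ∑ k ∈ Finset.range (lam/2+1), S s m k
        = ∑ k ∈ Finset.range (max s (lam/2) + 1), S s m k := by
      apply Finset.sum_subset (Finset.range_subset_range.mpr (by omega))
      intro k hk hnk
      rw [Finset.mem_range] at hk hnk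
      rcases le_or_gt k s with hks | hks
      · exact S_of_lt (by omega)
      · exact S_of_lt' hks
    have h2 : ∑ k ∈ Finset.range (s+1), S s m k
        = ∑ k ∈ Finset.range (max s (lam/2) + 1), S s m k := by
      apply Finset.sum_subset (Finset.range_subset_range.mpr (by omega))
      intro k hk hnk
      rw [Finset.mem_range] at hk hnk
      exact S_of_lt' (by omega)
    rw [h1, ← h2, Fid]
  have hpt : ∀ k ∈ Finset.range (lam/2+1),
      bcoef lam k * iQ (gb (lam - 2*k) ((s:ℤ) - k))
        = (RatFunc.X ^ ((s : ℤ) * ((s : ℤ) - lam)) * iQ (gb lam s)) * S s m k := by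
    intro k hk
    rw [Finset.mem_range] at hk
    have h2k : 2*k ≤ lam := by omega
    rcases lt_or_ge s k with hks | hks
    · have hgb : gb (lam - 2*k) ((s:ℤ) - k) = 0 := by
        rw [gb, if_neg]
        intro hc
        have := hc.1
        omega
      rw [hgb, map_zero, mul_zero, S_of_lt' hks, mul_zero]
    rcases lt_or_ge m k with hkm | hkm
    · have hgb : gb (lam - 2*k) ((s:ℤ) - k) = 0 := by
        rw [gb, if_neg]
        intro hc
        have := hc.2
        omega
      rw [hgb, map_zero, mul_zero, S_of_lt hkm, mul_zero]
    -- main case : k ≤ s, k ≤ m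
    have hcast : (s:ℤ) - k = ((s - k : ℕ) : ℤ) := by omega
    have hle : s - k ≤ lam - 2*k := by omega
    rw [hcast, iQ_gb _ _ hle, iQ_gb lam s h]
    rw [bcoef, if_pos h2k, poch_eq, poch_eq, poch_eq, inv_inv]
    rw [S, G, if_pos hle, G, if_pos h, G, if_pos hks, G, if_pos hkm]
    rw [show lam - 2*k - (s - k) = m - k from by omega, ← hmdef]
    have hzp : (RatFunc.X : RatFunc ℚ) ^ ((k:ℤ) * ((k:ℤ) - (lam:ℤ)))
        = RatFunc.X ^ ((s:ℤ) * ((s:ℤ) - (lam:ℤ)))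
          * RatFunc.X ^ (((s:ℤ) - (k:ℤ)) * ((m:ℤ) - (k:ℤ))) := by
      rw [← zpow_add₀ hx]
      congr 1
      rw [show (m:ℤ) = (lam:ℤ) - (s:ℤ) from by omega]
      ring
    rw [hzp]
    have n1 := E_ne_zero lam
    have n2 := E_ne_zero s
    have n3 := E_ne_zero m
    have n4 := E_ne_zero k
    have n5 := E_ne_zero (s - k)
    have n6 := E_ne_zero (m - k)
    have n7 := E_ne_zero (lam - 2*k)
    field_simp
  rw [Finset.sum_congr rfl hpt, ← Finset.mul_sum, hsum, mul_one]
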